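/- arXiv:1804.07595 — 3 statements merged into one kernel-verified Lean document; each statement's English description precedes it below -/
import Mathlib

section
/- For any function f : E → F between normed spaces, any n ≥ 1, any x ∈ E and h ∈ E, the identity f(x + 2^n h) − f(x) − 2^n (f(x+h) − f(x)) = Σ_{k=0}^{n−1} 2^k · Δ²_{2^{n−k−1} h} f(x) holds, where Δ²_v f(x) = f(x+2v) − 2f(x+v) + f(x). -/
/-- Second difference operator: Δ²_v f(x) = f(x+2v) − 2f(x+v) + f(x). -/
def secondDiff {E F : Type*} [AddCommGroup E] [AddCommGroup F] [Module ℝ F]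
    (f : E → F) (v : E) (x : E) : F :=
  f (x + 2 • v) - (2 : ℝ) • f (x + v) + f x

theorem stmt1 {E F : Type*} [AddCommGroup E] [Module ℝ E] [AddCommGroup F] [Module ℝ F]
    (f : E → F) (n : ℕ) (hn : 1 ≤ n) (x h : E) :
    f (x + (2 ^ n : ℝ) • h) - f x - (2 ^ n : ℝ) • (f (x + h) - f x) =
      ∑ k ∈ Finset.range n, (2 ^ k : ℝ) • secondDiff f ((2 ^ (n - k - 1) : ℝ) • h) x := by
  induction n, hn using Nat.le_induction generalizing h with
  | base =>
    simp only [Finset.sum_range_one, secondDiff, Nat.sub_self, pow_zero, pow_one,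
      one_smul, two_smul]
    module
  | succ n hn IH =>
    rw [Finset.sum_range_succ]
    have e : ∑ k ∈ Finset.range n, (2 ^ k : ℝ) • secondDiff f ((2 ^ (n + 1 - k - 1) : ℝ) • h) x
        = f (x + (2 ^ n : ℝ) • ((2 : ℝ) • h)) - f x
          - (2 ^ n : ℝ) • (f (x + (2 : ℝ) • h) - f x) := by
      refine (Finset.sum_congr rfl fun k hk => ?_).trans (IH ((2 : ℝ) • h)).symm
      rw [Finset.mem_range] at hk
      have hk' : n + 1 - k - 1 = (n - k - 1) + 1 := by omega
      rw [hk', pow_succ, smul_smul]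
    rw [e, show n + 1 - n - 1 = 0 from by omega]
    simp only [secondDiff, ← Nat.cast_smul_eq_nsmul ℝ, Nat.cast_ofNat, smul_smul, pow_succ,
      Nat.add_sub_cancel, Nat.sub_self, pow_zero, one_smul]
    module
end

section
/- Let f : E → F be bounded with sup-norm ‖f‖_∞, let α ∈ (0,1), and suppose Z := sup_{t>0} η(f;t)/t^α < ∞, where η(f;t) = sup_{x, ‖h‖≤t} ‖f(x+2h)−2f(x+h)+f(x)‖. Then sup_{t>0} ω(f;t)/t^α ≤ (1/(1−2^{α−1})) · Z, where ω(f;t) = sup_{x, ‖h‖≤t} ‖f(x+h)−f(x)‖. -/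
open Set

noncomputable def omegaMod {E F : Type*} [NormedAddCommGroup E] [NormedAddCommGroup F]
    (f : E → F) (t : ℝ) : ℝ :=
  sSup {r : ℝ | ∃ x h : E, ‖h‖ ≤ t ∧ r = ‖f (x + h) - f x‖}

noncomputable def etaMod {E F : Type*} [NormedAddCommGroup E] [NormedSpace ℝ E]
    [NormedAddCommGroup F] [NormedSpace ℝ F] (f : E → F) (t : ℝ) : ℝ :=
  sSup {r : ℝ | ∃ x h : E, ‖h‖ ≤ t ∧ r = ‖f (x + 2 • h) - 2 • f (x + h) + f x‖}

/-- If f is bounded and its second modulus satisfies η(f;t) ≤ Z t^α with α ∈ (0,1),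
then the first modulus satisfies ω(f;t) ≤ (1/(1−2^{α−1})) Z t^α, i.e.
sup_t ω(f;t)/t^α ≤ (1/(1−2^{α−1})) sup_t η(f;t)/t^α. -/
theorem stmt2 {E F : Type*} [NormedAddCommGroup E] [NormedSpace ℝ E]
    [NormedAddCommGroup F] [NormedSpace ℝ F]
    (f : E → F) (M : ℝ) (hf : ∀ x, ‖f x‖ ≤ M)
    (α : ℝ) (hα : α ∈ Set.Ioo (0 : ℝ) 1)
    (Z : ℝ) (hZ : ∀ t > (0 : ℝ), etaMod f t ≤ Z * t ^ α) :
    ∀ t > (0 : ℝ), omegaMod f t ≤ (1 / (1 - 2 ^ (α - 1))) * Z * t ^ α := by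
  obtain ⟨hα0, hα1⟩ := hα
  set r : ℝ := (2:ℝ) ^ (α - 1) with hrdef
  have hr0 : 0 < r := Real.rpow_pos_of_pos two_pos _
  have hr1 : r < 1 := by
    have : (2:ℝ) ^ (α - 1) < 2 ^ (0:ℝ) :=
      Real.rpow_lt_rpow_of_exponent_lt one_lt_two (by linarith)
    simpa using this
  have hsub : 0 < 1 - r := by linarith
  have hZ0 : 0 ≤ Z := by
    have h1 := hZ 1 one_pos
    have h2 : (0:ℝ) ≤ etaMod f 1 := Real.sSup_nonneg (by
      rintro s ⟨x, h, _, rfl⟩; exact norm_nonneg _)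
    rw [Real.one_rpow, mul_one] at h1
    linarith
  have homega_nonneg : ∀ t : ℝ, 0 ≤ omegaMod f t := fun t =>
    Real.sSup_nonneg (by rintro s ⟨x, h, _, rfl⟩; exact norm_nonneg _)
  have heta_nonneg : ∀ t : ℝ, 0 ≤ etaMod f t := fun t =>
    Real.sSup_nonneg (by rintro s ⟨x, h, _, rfl⟩; exact norm_nonneg _)
  rcases isEmpty_or_nonempty E with hE | hE
  · intro t ht
    have h0 : omegaMod f t = 0 := by
      have : {s : ℝ | ∃ x h : E, ‖h‖ ≤ t ∧ s = ‖f (x + h) - f x‖} = ∅ := by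
        ext s; simp [IsEmpty.exists_iff]
      rw [omegaMod, this, Real.sSup_empty]
    rw [h0]
    have ht' : (0:ℝ) ≤ t ^ α := Real.rpow_nonneg ht.le _
    have : (0:ℝ) ≤ 1 / (1 - r) := by positivity
    calc (0:ℝ) ≤ (1 / (1 - r)) * (Z * t ^ α) := by positivity
    _ = (1 / (1 - r)) * Z * t ^ α := by ring
  · obtain ⟨x0⟩ := hE
    have hM0 : 0 ≤ M := le_trans (norm_nonneg _) (hf x0)
    -- upper bound on omega set and eta set
    have hOb : ∀ t : ℝ, BddAbove {s : ℝ | ∃ x h : E, ‖h‖ ≤ t ∧ s = ‖f (x + h) - f x‖} := by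
      intro t
      refine ⟨2 * M, ?_⟩
      rintro s ⟨x, h, _, rfl⟩
      calc ‖f (x + h) - f x‖ ≤ ‖f (x + h)‖ + ‖f x‖ := norm_sub_le _ _
      _ ≤ M + M := add_le_add (hf _) (hf _)
      _ = 2 * M := by ring
    have hEb : ∀ t : ℝ, BddAbove {s : ℝ | ∃ x h : E, ‖h‖ ≤ t ∧
        s = ‖f (x + 2 • h) - 2 • f (x + h) + f x‖} := by
      intro t
      refine ⟨4 * M, ?_⟩
      rintro s ⟨x, h, _, rfl⟩
      have hs1 : ‖2 • f (x + h)‖ ≤ 2 * M := by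
        calc ‖2 • f (x + h)‖ ≤ 2 * ‖f (x + h)‖ := by
              simpa using (norm_nsmul_le : ‖(2:ℕ) • f (x + h)‖ ≤ ((2:ℕ):ℝ) * ‖f (x + h)‖)
        _ ≤ 2 * M := by linarith [hf (x + h)]
      calc ‖f (x + 2 • h) - 2 • f (x + h) + f x‖
          ≤ ‖f (x + 2 • h) - 2 • f (x + h)‖ + ‖f x‖ := norm_add_le _ _
      _ ≤ (‖f (x + 2 • h)‖ + ‖2 • f (x + h)‖) + ‖f x‖ := by
          have := norm_sub_le (f (x + 2 • h)) (2 • f (x + h)); linarith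
      _ ≤ (M + 2 * M) + M := by
          have := hf (x + 2 • h); have := hf x; linarith
      _ = 4 * M := by ring
    have hbddO : ∀ t : ℝ, omegaMod f t ≤ 2 * M := by
      intro t
      apply Real.sSup_le
      · rintro s ⟨x, h, _, rfl⟩
        calc ‖f (x + h) - f x‖ ≤ ‖f (x + h)‖ + ‖f x‖ := norm_sub_le _ _
        _ ≤ M + M := add_le_add (hf _) (hf _)
        _ = 2 * M := by ring
      · linarith
    -- recursion
    have hrec : ∀ t : ℝ, 0 < t →
        omegaMod f t ≤ (1/2) * omegaMod f (2 * t) + (1/2) * etaMod f t := by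
      intro t ht
      apply Real.sSup_le
      · rintro s ⟨x, h, hh, rfl⟩
        have key : f (x + h) - f x
            = (1/2:ℝ) • ((f (x + 2 • h) - f x)
              - (f (x + 2 • h) - 2 • f (x + h) + f x)) := by module
        have hA : ‖f (x + 2 • h) - f x‖ ≤ omegaMod f (2 * t) := by
          apply le_csSup (hOb (2 * t))
          refine ⟨x, 2 • h, ?_, rfl⟩
          calc ‖2 • h‖ ≤ 2 * ‖h‖ := by simpa using (norm_nsmul_le : ‖(2:ℕ) • h‖ ≤ ((2:ℕ):ℝ) * ‖h‖)
          _ ≤ 2 * t := by linarith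
        have hB : ‖f (x + 2 • h) - 2 • f (x + h) + f x‖ ≤ etaMod f t :=
          le_csSup (hEb t) ⟨x, h, hh, rfl⟩
        calc ‖f (x + h) - f x‖
            = (1/2) * ‖(f (x + 2 • h) - f x)
              - (f (x + 2 • h) - 2 • f (x + h) + f x)‖ := by
              rw [key, norm_smul]; norm_num
        _ ≤ (1/2) * (‖f (x + 2 • h) - f x‖
              + ‖f (x + 2 • h) - 2 • f (x + h) + f x‖) := by
              gcongr; exact norm_sub_le _ _
        _ ≤ (1/2) * (omegaMod f (2 * t) + etaMod f t) := by gcongr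
        _ = (1/2) * omegaMod f (2 * t) + (1/2) * etaMod f t := by ring
      · have := homega_nonneg (2 * t); have := heta_nonneg t; linarith
    have h2α : (2:ℝ) ^ α = 2 * r := by
      rw [hrdef, Real.rpow_sub two_pos, Real.rpow_one]
      ring
    -- iteration
    have hiter : ∀ n : ℕ, ∀ t : ℝ, 0 < t →
        omegaMod f t ≤ (1/2:ℝ)^n * (2 * M)
          + (1/2) * Z * t ^ α * ∑ k ∈ Finset.range n, r ^ k := by
      intro n
      induction n with
      | zero => intro t ht; simpa using hbddO t
      | succ n ih =>
        intro t ht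
        have h2t : (0:ℝ) < 2 * t := by linarith
        have hmul : ((2:ℝ) * t) ^ α = 2 ^ α * t ^ α :=
          Real.mul_rpow (by norm_num) ht.le
        have htα : (0:ℝ) ≤ t ^ α := Real.rpow_nonneg ht.le _
        calc omegaMod f t ≤ (1/2) * omegaMod f (2 * t) + (1/2) * etaMod f t :=
              hrec t ht
        _ ≤ (1/2) * ((1/2:ℝ)^n * (2 * M)
              + (1/2) * Z * (2 * t) ^ α * ∑ k ∈ Finset.range n, r ^ k)
            + (1/2) * (Z * t ^ α) := by
              gcongr
              · exact ih (2 * t) h2t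
              · exact hZ t ht
        _ = (1/2:ℝ)^(n+1) * (2 * M)
              + (1/2) * Z * t ^ α * (r * ∑ k ∈ Finset.range n, r ^ k + 1) := by
              rw [hmul, h2α]; ring
        _ = (1/2:ℝ)^(n+1) * (2 * M)
              + (1/2) * Z * t ^ α * ∑ k ∈ Finset.range (n+1), r ^ k := by
              rw [geom_sum_succ]
    have hgeom : ∀ n : ℕ, ∑ k ∈ Finset.range n, r ^ k ≤ 1 / (1 - r) := by
      intro n
      rw [geom_sum_eq (ne_of_lt hr1)]
      have heq : (r ^ n - 1) / (r - 1) = (1 - r ^ n) / (1 - r) := by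
        rw [div_eq_div_iff (by linarith) (by linarith)]; ring
      rw [heq]
      have : (0:ℝ) ≤ r ^ n := pow_nonneg hr0.le n
      gcongr
      linarith
    intro t ht
    have htα : (0:ℝ) ≤ t ^ α := Real.rpow_nonneg ht.le _
    have hZt : (0:ℝ) ≤ (1/2) * Z * t ^ α := by positivity
    have hseq : ∀ n : ℕ, omegaMod f t ≤ (1/2:ℝ)^n * (2 * M)
        + (1/2) * Z * t ^ α * (1 / (1 - r)) := by
      intro n
      refine (hiter n t ht).trans ?_
      gcongr
      exact hgeom n
    have htend : Filter.Tendsto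
        (fun n : ℕ => (1/2:ℝ)^n * (2 * M) + (1/2) * Z * t ^ α * (1 / (1 - r)))
        Filter.atTop (nhds (0 * (2 * M) + (1/2) * Z * t ^ α * (1 / (1 - r)))) := by
      apply Filter.Tendsto.add_const
      apply Filter.Tendsto.mul_const
      exact tendsto_pow_atTop_nhds_zero_of_lt_one (by norm_num) (by norm_num)
    have hlim : omegaMod f t ≤ 0 * (2 * M) + (1/2) * Z * t ^ α * (1 / (1 - r)) :=
      ge_of_tendsto' htend hseq
    rw [zero_mul, zero_add] at hlim
    have hfinal : (1/2) * Z * t ^ α * (1 / (1 - r)) ≤ (1 / (1 - r)) * Z * t ^ α := by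
      have h1 : (0:ℝ) ≤ Z * t ^ α * (1 / (1 - r)) := by positivity
      nlinarith
    linarith
end

section
/- Let g₁, g₂ : E → ℝ be bounded functions with second moduli satisfying sup_t η(gᵢ;t)/t^α ≤ Zᵢ and first moduli satisfying sup_t ω(gᵢ;t)/t^{α/2} ≤ Hᵢ, for some α ∈ (0,1]. Then the pointwise product Ψ(x) = g₁(x)·g₂(x) satisfies, for all t > 0, η(Ψ;t) ≤ C·t^α where C depends only on ‖g₁‖_∞, ‖g₂‖_∞, Z₁, Z₂, H₁, H₂. Explicitly one may take η(Ψ;t) ≤ (Z₁‖g₂‖_∞ + ‖g₁‖_∞ Z₂ + 3 H₁ H₂)·t^α. -/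
open Set

lemma omega_ge {E : Type*} [NormedAddCommGroup E] {f : E → ℝ} {M t : ℝ}
    (hM : ∀ x, |f x| ≤ M) (x h : E) (hh : ‖h‖ ≤ t) :
    |f (x + h) - f x| ≤ omegaMod f t := by
  have : ‖f (x + h) - f x‖ ≤ omegaMod f t := by
    apply le_csSup
    · refine ⟨2 * M, ?_⟩
      rintro r ⟨y, k, -, rfl⟩
      calc ‖f (y + k) - f y‖ ≤ ‖f (y + k)‖ + ‖f y‖ := norm_sub_le _ _
        _ ≤ M + M := add_le_add (hM _) (hM _)
        _ = 2 * M := by ring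
    · exact ⟨x, h, hh, rfl⟩
  simpa [Real.norm_eq_abs] using this

lemma eta_ge {E : Type*} [NormedAddCommGroup E] [NormedSpace ℝ E] {f : E → ℝ} {M t : ℝ}
    (hM : ∀ x, |f x| ≤ M) (x h : E) (hh : ‖h‖ ≤ t) :
    |f (x + 2 • h) - 2 * f (x + h) + f x| ≤ etaMod f t := by
  have : ‖f (x + 2 • h) - 2 • f (x + h) + f x‖ ≤ etaMod f t := by
    apply le_csSup
    · refine ⟨4 * M, ?_⟩
      rintro r ⟨y, k, -, rfl⟩
      calc ‖f (y + 2 • k) - 2 • f (y + k) + f y‖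
          ≤ ‖f (y + 2 • k) - 2 • f (y + k)‖ + ‖f y‖ := norm_add_le _ _
        _ ≤ ‖f (y + 2 • k)‖ + ‖2 • f (y + k)‖ + ‖f y‖ := by
            linarith [norm_sub_le (f (y + 2 • k)) (2 • f (y + k))]
        _ ≤ M + 2 * M + M := by
            have : ‖(2 : ℕ) • f (y + k)‖ = 2 * ‖f (y + k)‖ := by
              simp [nsmul_eq_mul, norm_mul]
            rw [this]
            have h1 := hM (y + 2 • k); have h2 := hM (y + k); have h3 := hM y
            rw [← Real.norm_eq_abs] at h1 h2 h3
            linarith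
        _ = 4 * M := by ring
    · exact ⟨x, h, hh, rfl⟩
  have h2 : (2 : ℕ) • f (x + h) = 2 * f (x + h) := by simp [nsmul_eq_mul]
  rw [Real.norm_eq_abs, h2] at this
  exact this

/-- Product estimate in Zygmund/Besov spaces (scalar case): if g₁, g₂ are bounded with
η(gᵢ;t) ≤ Zᵢ t^α and ω(gᵢ;t) ≤ Hᵢ t^{α/2}, then
η(g₁·g₂;t) ≤ (Z₁‖g₂‖_∞ + ‖g₁‖_∞ Z₂ + 3 H₁ H₂) t^α. -/
theorem stmt10 {E : Type*} [NormedAddCommGroup E] [NormedSpace ℝ E]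
    (g₁ g₂ : E → ℝ) (M₁ M₂ Z₁ Z₂ H₁ H₂ α : ℝ) (hα : α ∈ Set.Ioc (0 : ℝ) 1)
    (hM₁ : ∀ x, |g₁ x| ≤ M₁) (hM₂ : ∀ x, |g₂ x| ≤ M₂)
    (hZ₁ : ∀ t > (0 : ℝ), etaMod g₁ t ≤ Z₁ * t ^ α)
    (hZ₂ : ∀ t > (0 : ℝ), etaMod g₂ t ≤ Z₂ * t ^ α)
    (hH₁ : ∀ t > (0 : ℝ), omegaMod g₁ t ≤ H₁ * t ^ (α / 2))
    (hH₂ : ∀ t > (0 : ℝ), omegaMod g₂ t ≤ H₂ * t ^ (α / 2)) :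
    ∀ t > (0 : ℝ),
      etaMod (fun x => g₁ x * g₂ x) t ≤ (Z₁ * M₂ + M₁ * Z₂ + 3 * H₁ * H₂) * t ^ α := by
  obtain ⟨hα0, _⟩ := hα
  intro t ht
  have hM₁0 : 0 ≤ M₁ := le_trans (abs_nonneg _) (hM₁ 0)
  have hM₂0 : 0 ≤ M₂ := le_trans (abs_nonneg _) (hM₂ 0)
  have hη₁ : ∀ x h : E, ‖h‖ ≤ t → |g₁ (x + 2 • h) - 2 * g₁ (x + h) + g₁ x| ≤ Z₁ * t ^ α :=
    fun x h hh => le_trans (eta_ge hM₁ x h hh) (hZ₁ t ht)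
  have hη₂ : ∀ x h : E, ‖h‖ ≤ t → |g₂ (x + 2 • h) - 2 * g₂ (x + h) + g₂ x| ≤ Z₂ * t ^ α :=
    fun x h hh => le_trans (eta_ge hM₂ x h hh) (hZ₂ t ht)
  have hω₁ : ∀ x h : E, ‖h‖ ≤ t → |g₁ (x + h) - g₁ x| ≤ H₁ * t ^ (α / 2) :=
    fun x h hh => le_trans (omega_ge hM₁ x h hh) (hH₁ t ht)
  have hω₂ : ∀ x h : E, ‖h‖ ≤ t → |g₂ (x + h) - g₂ x| ≤ H₂ * t ^ (α / 2) :=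
    fun x h hh => le_trans (omega_ge hM₂ x h hh) (hH₂ t ht)
  have h00 : ‖(0 : E)‖ ≤ t := by simpa using ht.le
  have hZ₁t : 0 ≤ Z₁ * t ^ α :=
    le_trans (abs_nonneg (g₁ (0 + 2 • 0) - 2 * g₁ (0 + 0) + g₁ 0)) (hη₁ 0 0 h00)
  have hZ₂t : 0 ≤ Z₂ * t ^ α :=
    le_trans (abs_nonneg (g₂ (0 + 2 • 0) - 2 * g₂ (0 + 0) + g₂ 0)) (hη₂ 0 0 h00)
  have hH₁t : 0 ≤ H₁ * t ^ (α / 2) :=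
    le_trans (abs_nonneg (g₁ (0 + 0) - g₁ 0)) (hω₁ 0 0 h00)
  have hH₂t : 0 ≤ H₂ * t ^ (α / 2) :=
    le_trans (abs_nonneg (g₂ (0 + 0) - g₂ 0)) (hω₂ 0 0 h00)
  have hrpow : t ^ (α / 2) * t ^ (α / 2) = t ^ α := by
    rw [← Real.rpow_add ht]; norm_num
  apply Real.sSup_le
  · rintro r ⟨x, h, hh, rfl⟩
    have hsplit : x + 2 • h = (x + h) + h := by
      rw [two_smul]; abel
    have key : (fun x => g₁ x * g₂ x) (x + 2 • h) - 2 • (fun x => g₁ x * g₂ x) (x + h)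
        + (fun x => g₁ x * g₂ x) x
        = (g₁ (x + 2 • h) - 2 * g₁ (x + h) + g₁ x) * g₂ (x + 2 • h)
          + g₁ x * (g₂ (x + 2 • h) - 2 * g₂ (x + h) + g₂ x)
          + 2 * ((g₁ (x + h) - g₁ x) * (g₂ (x + 2 • h) - g₂ (x + h))) := by
      simp only [nsmul_eq_mul, Nat.cast_ofNat]
      ring
    rw [Real.norm_eq_abs, key]
    have b1 : |(g₁ (x + 2 • h) - 2 * g₁ (x + h) + g₁ x) * g₂ (x + 2 • h)|
        ≤ (Z₁ * t ^ α) * M₂ := by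
      rw [abs_mul]
      exact mul_le_mul (hη₁ x h hh) (hM₂ _) (abs_nonneg _) hZ₁t
    have b2 : |g₁ x * (g₂ (x + 2 • h) - 2 * g₂ (x + h) + g₂ x)|
        ≤ M₁ * (Z₂ * t ^ α) := by
      rw [abs_mul]
      exact mul_le_mul (hM₁ _) (hη₂ x h hh) (abs_nonneg _) hM₁0
    have b3 : |(g₁ (x + h) - g₁ x) * (g₂ (x + 2 • h) - g₂ (x + h))|
        ≤ (H₁ * t ^ (α / 2)) * (H₂ * t ^ (α / 2)) := by
      rw [abs_mul]
      refine mul_le_mul (hω₁ x h hh) ?_ (abs_nonneg _) hH₁t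
      rw [hsplit]
      exact hω₂ (x + h) h hh
    have prodpos : 0 ≤ H₁ * t ^ (α / 2) * (H₂ * t ^ (α / 2)) := mul_nonneg hH₁t hH₂t
    have hHH : H₁ * t ^ (α / 2) * (H₂ * t ^ (α / 2)) = H₁ * H₂ * t ^ α := by
      rw [← hrpow]; ring
    calc |(g₁ (x + 2 • h) - 2 * g₁ (x + h) + g₁ x) * g₂ (x + 2 • h)
          + g₁ x * (g₂ (x + 2 • h) - 2 * g₂ (x + h) + g₂ x)
          + 2 * ((g₁ (x + h) - g₁ x) * (g₂ (x + 2 • h) - g₂ (x + h)))|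
        ≤ |(g₁ (x + 2 • h) - 2 * g₁ (x + h) + g₁ x) * g₂ (x + 2 • h)|
          + |g₁ x * (g₂ (x + 2 • h) - 2 * g₂ (x + h) + g₂ x)|
          + 2 * |(g₁ (x + h) - g₁ x) * (g₂ (x + 2 • h) - g₂ (x + h))| := by
          have := abs_add_le ((g₁ (x + 2 • h) - 2 * g₁ (x + h) + g₁ x) * g₂ (x + 2 • h)
            + g₁ x * (g₂ (x + 2 • h) - 2 * g₂ (x + h) + g₂ x))
            (2 * ((g₁ (x + h) - g₁ x) * (g₂ (x + 2 • h) - g₂ (x + h))))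
          have h2 := abs_add_le ((g₁ (x + 2 • h) - 2 * g₁ (x + h) + g₁ x) * g₂ (x + 2 • h))
            (g₁ x * (g₂ (x + 2 • h) - 2 * g₂ (x + h) + g₂ x))
          rw [abs_mul, abs_two] at this
          linarith
      _ ≤ (Z₁ * t ^ α) * M₂ + M₁ * (Z₂ * t ^ α)
          + 2 * ((H₁ * t ^ (α / 2)) * (H₂ * t ^ (α / 2))) := by linarith
      _ ≤ (Z₁ * M₂ + M₁ * Z₂ + 3 * H₁ * H₂) * t ^ α := by
          rw [hHH] at prodpos ⊢
          ring_nf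
          nlinarith [prodpos]
  · have heq : H₁ * t ^ (α / 2) * (H₂ * t ^ (α / 2)) = H₁ * H₂ * t ^ α := by
      rw [← hrpow]; ring
    have h3 : 0 ≤ H₁ * H₂ * t ^ α := heq ▸ mul_nonneg hH₁t hH₂t
    nlinarith [mul_nonneg hZ₁t hM₂0, mul_nonneg hM₁0 hZ₂t, h3]
end
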